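/- Let (A,∘,α,β) be a BiHom-pre-Lie superalgebra with α,β bijective and let R be a Rota-Baxter operator of weight zero on it (with R commuting with α and β). Then the even products x▷y = R(x)∘y and x◁y = −(−1)^{|x||y|}(α⁻¹β(y))∘R(αβ⁻¹(x)) define a BiHom-L-dendriform superalgebra structure (A,▷,◁,α,β) on A. -/

import Mathlib

private lemma aux_symm_mem
    (K : Type) [Field K]
    (A : Type) [AddCommGroup A] [Module K A]
    (𝒜 : ZMod 2 → Submodule K A)
    (hA : DirectSum.IsInternal 𝒜)
    (e : A ≃ₗ[K] A)
    (he : ∀ i : ZMod 2, ∀ a ∈ 𝒜 i, e a ∈ 𝒜 i) :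
    ∀ i : ZMod 2, ∀ a ∈ 𝒜 i, e.symm a ∈ 𝒜 i := by
  have hind := hA.submodule_iSupIndep
  have htop := hA.submodule_iSup_eq_top
  have hdisj : ∀ i j : ZMod 2, i ≠ j → ∀ v, v ∈ 𝒜 i → v ∈ 𝒜 j → v = 0 := by
    intro i j hij v hvi hvj
    exact Submodule.disjoint_def.mp (hind i) v hvi
      (Submodule.mem_iSup_of_mem j (Submodule.mem_iSup_of_mem (Ne.symm hij) hvj))
  intro i a ha
  have hb : e.symm a ∈ 𝒜 0 ⊔ 𝒜 1 := by
    have : e.symm a ∈ (⊤ : Submodule K A) := trivial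
    rw [← htop] at this
    refine (iSup_le (fun i => ?_) : (⨆ i, 𝒜 i) ≤ 𝒜 0 ⊔ 𝒜 1) this
    fin_cases i
    · exact le_sup_left
    · exact le_sup_right
  obtain ⟨b0, hb0, b1, hb1, hsum⟩ := Submodule.mem_sup.mp hb
  have hae : a = e b0 + e b1 := by
    rw [← map_add, hsum, e.apply_symm_apply]
  fin_cases i
  · have h1 : e b1 = 0 := by
      have hm : e b1 ∈ 𝒜 0 := by
        have : e b1 = a - e b0 := by rw [hae]; abel
        rw [this]; exact sub_mem ha (he 0 b0 hb0)
      exact hdisj 1 0 (by decide) _ (he 1 b1 hb1) hm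
    have : b1 = 0 := by simpa using congrArg e.symm h1
    rw [← hsum, this, add_zero]; exact hb0
  · have h0 : e b0 = 0 := by
      have hm : e b0 ∈ 𝒜 1 := by
        have : e b0 = a - e b1 := by rw [hae]; abel
        rw [this]; exact sub_mem ha (he 1 b1 hb1)
      exact hdisj 0 1 (by decide) _ (he 0 b0 hb0) hm
    have : b0 = 0 := by simpa using congrArg e.symm h0
    rw [← hsum, this, zero_add]; exact hb1

theorem statement16
    (K : Type) [Field K] [CharZero K]
    (A : Type) [AddCommGroup A] [Module K A]
    (𝒜 : ZMod 2 → Submodule K A)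
    (hA : DirectSum.IsInternal 𝒜)
    (c : A →ₗ[K] A →ₗ[K] A)
    (α β : A ≃ₗ[K] A)
    (hcomm : ∀ a, α (β a) = β (α a))
    (hαe : ∀ i : ZMod 2, ∀ a ∈ 𝒜 i, α a ∈ 𝒜 i)
    (hβe : ∀ i : ZMod 2, ∀ a ∈ 𝒜 i, β a ∈ 𝒜 i)
    (hce : ∀ i j : ZMod 2, ∀ x ∈ 𝒜 i, ∀ y ∈ 𝒜 j, c x y ∈ 𝒜 (i + j))
    (hαm : ∀ a b : A, α (c a b) = c (α a) (α b))
    (hβm : ∀ a b : A, β (c a b) = c (β a) (β b))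
    (hpre : ∀ i j k : ZMod 2, ∀ x ∈ 𝒜 i, ∀ y ∈ 𝒜 j, ∀ z ∈ 𝒜 k,
      c (c (β x) (α y)) (β z) - c (α (β x)) (c (α y) z)
        = ((-1 : K) ^ (i.val * j.val)) •
            (c (c (β y) (α x)) (β z) - c (α (β y)) (c (α x) z)))
    -- R is a Rota-Baxter operator of weight zero
    (R : A →ₗ[K] A)
    (hRe : ∀ i : ZMod 2, ∀ a ∈ 𝒜 i, R a ∈ 𝒜 i)
    (hRα : ∀ a, R (α a) = α (R a))
    (hRβ : ∀ a, R (β a) = β (R a))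
    (hRB : ∀ i j : ZMod 2, ∀ x ∈ 𝒜 i, ∀ y ∈ 𝒜 j,
      c (R x) (R y) = R (c (R x) y + c x (R y)))
    -- the products ▷ and ◁
    (dr : A → A → A) (hdr : ∀ x y, dr x y = c (R x) y)
    (dl : ZMod 2 → ZMod 2 → A → A → A)
    (hdl : ∀ i j x y, dl i j x y
      = -(((-1 : K) ^ (i.val * j.val)) • c (α.symm (β y)) (R (α (β.symm x))))) :
    -- `(A,▷,◁,α,β)` is a BiHom-L-dendriform superalgebra:
    (∀ i j : ZMod 2, ∀ x ∈ 𝒜 i, ∀ y ∈ 𝒜 j, dr x y ∈ 𝒜 (i + j))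
    ∧ (∀ i j : ZMod 2, ∀ x ∈ 𝒜 i, ∀ y ∈ 𝒜 j, dl i j x y ∈ 𝒜 (i + j))
    ∧ (∀ x y : A, α (dr x y) = dr (α x) (α y))
    ∧ (∀ x y : A, β (dr x y) = dr (β x) (β y))
    ∧ (∀ i j : ZMod 2, ∀ x ∈ 𝒜 i, ∀ y ∈ 𝒜 j, α (dl i j x y) = dl i j (α x) (α y))
    ∧ (∀ i j : ZMod 2, ∀ x ∈ 𝒜 i, ∀ y ∈ 𝒜 j, β (dl i j x y) = dl i j (β x) (β y))
    ∧ (∀ i j k : ZMod 2, ∀ x ∈ 𝒜 i, ∀ y ∈ 𝒜 j, ∀ z ∈ 𝒜 k,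
        dr (α (β x)) (dr (α y) z)
          = dr (dr (β x) (α y)) (β z) + dr (dl i j (β x) (α y)) (β z)
            + ((-1 : K) ^ (i.val * j.val)) • dr (α (β y)) (dr (α x) z)
            - ((-1 : K) ^ (i.val * j.val)) • dr (dl j i (β y) (α x)) (β z)
            - ((-1 : K) ^ (i.val * j.val)) • dr (dr (β y) (α x)) (β z))
    ∧ (∀ i j k : ZMod 2, ∀ x ∈ 𝒜 i, ∀ y ∈ 𝒜 j, ∀ z ∈ 𝒜 k,
        dr (α (β x)) (dl j k (α y) z)
          = dl (i + j) k (dr (β x) (α y)) (β z)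
            + ((-1 : K) ^ (i.val * j.val)) • dl j (i + k) (α (β y)) (dr (α x) z)
            + ((-1 : K) ^ (i.val * j.val)) • dl j (i + k) (α (β y)) (dl i k (α x) z)
            - ((-1 : K) ^ (i.val * j.val)) • dl (j + i) k (dl j i (β y) (α x)) (β z)) := by
  -- commutation helpers
  have hc1 : ∀ a, β (α a) = α (β a) := fun a => (hcomm a).symm
  have hc2 : ∀ a, β (α.symm a) = α.symm (β a) := fun a => by
    apply α.injective; rw [hcomm, α.apply_symm_apply, α.apply_symm_apply]
  have hc3 : ∀ a, β.symm (α a) = α (β.symm a) := fun a => by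
    apply β.injective
    rw [β.apply_symm_apply, hc1, β.apply_symm_apply]
  have hc4 : ∀ a, β.symm (α.symm a) = α.symm (β.symm a) := fun a => by
    apply β.injective
    rw [β.apply_symm_apply, hc2, β.apply_symm_apply]
  have hR3 : ∀ a, R (α.symm a) = α.symm (R a) := fun a => by
    apply α.injective; rw [← hRα, α.apply_symm_apply, α.apply_symm_apply]
  have hR4 : ∀ a, R (β.symm a) = β.symm (R a) := fun a => by
    apply β.injective; rw [← hRβ, β.apply_symm_apply, β.apply_symm_apply]
  have hαsm : ∀ a b, α.symm (c a b) = c (α.symm a) (α.symm b) := fun a b => by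
    apply α.injective
    rw [α.apply_symm_apply, hαm, α.apply_symm_apply, α.apply_symm_apply]
  have hβsm : ∀ a b, β.symm (c a b) = c (β.symm a) (β.symm b) := fun a b => by
    apply β.injective
    rw [β.apply_symm_apply, hβm, β.apply_symm_apply, β.apply_symm_apply]
  have hαse : ∀ i : ZMod 2, ∀ a ∈ 𝒜 i, α.symm a ∈ 𝒜 i := aux_symm_mem K A 𝒜 hA α hαe
  have hβse : ∀ i : ZMod 2, ∀ a ∈ 𝒜 i, β.symm a ∈ 𝒜 i := aux_symm_mem K A 𝒜 hA β hβe
  have hzv : ZMod.val (0:ZMod 2) = 0 := rfl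
  have hzv1 : ZMod.val (1:ZMod 2) = 1 := rfl
  have hzv2 : ZMod.val (2:ZMod 2) = 0 := rfl
  have h01 : ∀ a : ZMod 2, a = 0 ∨ a = 1 := by decide
  have hssq : ∀ i j : ZMod 2, ((-1:K)^(i.val*j.val)) * ((-1:K)^(j.val*i.val)) = 1 := by
    intro i j; rcases h01 i with rfl | rfl <;> rcases h01 j with rfl | rfl <;> norm_num [hzv, hzv1]
  have hsaddl : ∀ i j k : ZMod 2, ((-1:K)^((i+j).val * k.val))
      = (-1:K)^(i.val*k.val) * (-1:K)^(j.val*k.val) := by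
    intro i j k; rcases h01 i with rfl | rfl <;> rcases h01 j with rfl | rfl <;> rcases h01 k with rfl | rfl <;> norm_num [hzv, hzv1, hzv2]
  have hsaddr : ∀ i j k : ZMod 2, ((-1:K)^(i.val * (j+k).val))
      = (-1:K)^(i.val*j.val) * (-1:K)^(i.val*k.val) := by
    intro i j k; rcases h01 i with rfl | rfl <;> rcases h01 j with rfl | rfl <;> rcases h01 k with rfl | rfl <;> norm_num [hzv, hzv1, hzv2]
  refine ⟨?_, ?_, ?_, ?_, ?_, ?_, ?_, ?_⟩
  · intro i j x hx y hy
    rw [hdr]; exact hce i j _ (hRe i x hx) _ hy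
  · intro i j x hx y hy
    rw [hdl, add_comm i j]
    exact neg_mem (Submodule.smul_mem _ _
      (hce j i _ (hαse j _ (hβe j y hy)) _ (hRe i _ (hαe i _ (hβse i x hx)))))
  · intro x y
    rw [hdr, hdr, hαm, hRα]
  · intro x y
    rw [hdr, hdr, hβm, hRβ]
  · intro i j x hx y hy
    simp only [hdl, map_neg, map_smul, hαm, hRα, hc1, hc2, hc3, hc4, hαsm,
      LinearEquiv.symm_apply_apply, LinearEquiv.apply_symm_apply]
  · intro i j x hx y hy
    simp only [hdl, map_neg, map_smul, hβm, hRβ, hRα, hc1, hc2, hc3, hc4, hβsm, hαsm, hR3, hR4,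
      LinearEquiv.symm_apply_apply, LinearEquiv.apply_symm_apply]
  · intro i j k x hx y hy z hz
    have hp := hpre i j k (R x) (hRe i x hx) (R y) (hRe j y hy) z hz
    have hrb1' : c (c (β (R x)) (α (R y))) (β z)
        = c (R (c (β (R x)) (α y))) (β z) + c (R (c (β x) (α (R y)))) (β z) := by
      have := congrArg (fun w => c w (β z)) (hRB i j (β x) (hβe i x hx) (α y) (hαe j y hy))
      simpa [hRα, hRβ, map_add] using this
    have hrb2' : c (c (β (R y)) (α (R x))) (β z)
        = c (R (c (β (R y)) (α x))) (β z) + c (R (c (β y) (α (R x)))) (β z) := by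
      have := congrArg (fun w => c w (β z)) (hRB j i (β y) (hβe j y hy) (α x) (hαe i x hx))
      simpa [hRα, hRβ, map_add] using this
    have hsq2 : ((-1:K)^(i.val*j.val*2)) = 1 := Even.neg_one_pow ⟨i.val*j.val, by ring⟩
    simp only [hdr, hdl, hc1, hc2, hc3, hc4, hRα, hRβ, hR3, hR4, hαm, hβm, hαsm, hβsm,
      LinearEquiv.symm_apply_apply, LinearEquiv.apply_symm_apply,
      map_add, map_neg, map_smul, LinearMap.add_apply, LinearMap.neg_apply, LinearMap.smul_apply,
      smul_neg, neg_neg, smul_smul]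
    linear_combination (norm := module) (-1:K) • hp + hrb1'
      - ((-1:K)^(i.val*j.val)) • hrb2' - (1:K) • hsq2 • (c (R (c (β x) (α (R y)))) (β z))
  · intro i j k x hx y hy z hz
    have memz2 : α.symm (α.symm (β z)) ∈ 𝒜 k := hαse k _ (hαse k _ (hβe k z hz))
    have memy2 : α (α (β.symm (R y))) ∈ 𝒜 j := hαe j _ (hαe j _ (hβse j _ (hRe j y hy)))
    have memyy : α (α (β.symm y)) ∈ 𝒜 j := hαe j _ (hαe j _ (hβse j y hy))
    have hp8 := hpre i k j (R x) (hRe i x hx) _ memz2 _ memy2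
    have hrb8 := congrArg (fun w => c (α.symm (β (β z))) w) (hRB i j (α x) (hαe i x hx) _ memyy)
    have hsq2 : ((-1:K)^(i.val*j.val*2)) = 1 := Even.neg_one_pow ⟨i.val*j.val, by ring⟩
    simp only [hc1, hc2, hc3, hc4, hRα, hRβ, hR3, hR4, hαm, hβm, hαsm, hβsm,
      LinearEquiv.symm_apply_apply, LinearEquiv.apply_symm_apply,
      map_add, map_neg, map_smul, LinearMap.add_apply, LinearMap.neg_apply,
      LinearMap.smul_apply, smul_neg, neg_neg, smul_smul] at hp8 hrb8
    simp only [hdr, hdl, hsaddl, hsaddr, hc1, hc2, hc3, hc4, hRα, hRβ, hR3, hR4, hαm, hβm,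
      hαsm, hβsm, LinearEquiv.symm_apply_apply, LinearEquiv.apply_symm_apply,
      map_add, map_neg, map_smul, LinearMap.add_apply, LinearMap.neg_apply,
      LinearMap.smul_apply, smul_neg, neg_neg, smul_smul]
    linear_combination (norm := module) ((-1:K)^(j.val*k.val)) • hp8
      - (((-1:K)^(i.val*k.val)) * ((-1:K)^(j.val*k.val))) • hrb8
      + hsq2 • (((-1:K)^(j.val*k.val)) • c (c (β (R x)) (α.symm (β z))) (α (α (R y))))
      - hsq2 • ((((-1:K)^(i.val*k.val)) * ((-1:K)^(j.val*k.val))) •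
          c (c (α.symm (α.symm (β (β z)))) (α (R x))) (α (α (R y))))
      + hsq2 • ((((-1:K)^(i.val*k.val)) * ((-1:K)^(j.val*k.val))) •
          c (α.symm (β (β z))) (R (c (α x) (α (α (β.symm (R y)))))))
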